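/- Let a : ℝ → ℝ be a continuous almost periodic function whose mean M[a] = lim_{L→∞} (1/L)∫_c^{c+L} a(s) ds (uniformly in c) satisfies M[a] < 0. Then there exist K ≥ 1 and α > 0 such that e^{∫_s^t a(r) dr} ≤ K e^{−α(t−s)} for all real s ≤ t. -/
import Mathlib


/-- Bohr almost periodicity. -/
def AlmostPeriodic (a : ℝ → ℝ) : Prop :=
  ∀ ε > 0, ∃ ℓ > 0, ∀ x : ℝ, ∃ τ ∈ Set.Icc x (x + ℓ), ∀ t, |a (t + τ) - a t| < ε

/-- `μ` is the mean of `a`, uniformly in the left endpoint. -/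
def HasUniformMean (a : ℝ → ℝ) (μ : ℝ) : Prop :=
  ∀ ε > 0, ∃ L₀ > 0, ∀ L ≥ L₀, ∀ c : ℝ,
    |(1 / L) * (∫ s in c..(c + L), a s) - μ| < ε

/-- An almost periodic continuous function is bounded. -/
lemma ap_bounded (a : ℝ → ℝ) (ha : Continuous a) (hap : AlmostPeriodic a) :
    ∃ C ≥ (0:ℝ), ∀ t, |a t| ≤ C := by
  obtain ⟨ℓ, hℓ, h⟩ := hap 1 one_pos
  obtain ⟨C₀, hC₀⟩ := (isCompact_Icc (a := (0:ℝ)) (b := ℓ)).exists_bound_of_continuousOn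
    (ha.abs.continuousOn)
  refine ⟨C₀ + 1, ?_, ?_⟩
  · have := hC₀ 0 ⟨le_refl _, hℓ.le⟩
    have : (0:ℝ) ≤ C₀ := le_trans (abs_nonneg _) this
    linarith
  · intro t
    obtain ⟨τ, hτ, hτ2⟩ := h (-t)
    have ht : t + τ ∈ Set.Icc (0:ℝ) ℓ := by
      constructor <;> [linarith [hτ.1]; linarith [hτ.2]]
    have h1 : |a (t + τ)| ≤ C₀ := by simpa using hC₀ _ ht
    have h2 : |a (t + τ) - a t| < 1 := hτ2 t
    calc |a t| = |a (t+τ) - (a (t+τ) - a t)| := by ring_nf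
      _ ≤ |a (t+τ)| + |a (t+τ) - a t| := abs_sub _ _
      _ ≤ C₀ + 1 := by linarith

/-- Almost periodic coefficient with negative mean yields an exponential dichotomy
estimate (identity projector) on the whole line. -/
theorem stmt_9 (a : ℝ → ℝ) (ha : Continuous a) (hap : AlmostPeriodic a)
    (μ : ℝ) (hμ : HasUniformMean a μ) (hneg : μ < 0) :
    ∃ K ≥ (1:ℝ), ∃ α > (0:ℝ), ∀ s t : ℝ, s ≤ t →
      Real.exp (∫ r in s..t, a r) ≤ K * Real.exp (-α * (t - s)) := by
  set α : ℝ := -μ/2 with hα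
  have hαpos : 0 < α := by simp [hα]; linarith
  obtain ⟨L₀, hL₀, hL⟩ := hμ α hαpos
  obtain ⟨C, hC0, hC⟩ := ap_bounded a ha hap
  refine ⟨Real.exp ((C + α) * L₀), Real.one_le_exp (by positivity), α, hαpos, ?_⟩
  intro s t hst
  by_cases hcase : L₀ ≤ t - s
  · -- long interval: use the mean directly
    have h1 := hL (t - s) hcase s
    rw [show s + (t - s) = t by ring] at h1
    have hpos : 0 < t - s := lt_of_lt_of_le hL₀ hcase
    have h2 : (1 / (t - s)) * (∫ r in s..t, a r) < μ + α := by
      have := abs_lt.mp h1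
      linarith [this.2]
    have h3 : (∫ r in s..t, a r) < (μ + α) * (t - s) := by
      have := (div_lt_iff₀ hpos).mp (by rwa [one_div, inv_mul_eq_div] at h2)
      linarith
    have h4 : μ + α = -α := by rw [hα]; ring
    have h5 : (∫ r in s..t, a r) ≤ -α * (t - s) := by rw [h4] at h3; linarith
    calc Real.exp (∫ r in s..t, a r) ≤ Real.exp (-α * (t - s)) := Real.exp_le_exp.mpr h5
      _ ≤ Real.exp ((C + α) * L₀) * Real.exp (-α * (t - s)) := by
          nlinarith [Real.exp_pos (-α * (t - s)), Real.one_le_exp (show (0:ℝ) ≤ (C + α) * L₀ by positivity)]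
  · -- short interval: use the bound on a
    push_neg at hcase
    have hInt : IntervalIntegrable a MeasureTheory.volume s t := ha.intervalIntegrable s t
    have hb : |∫ r in s..t, a r| ≤ C * |t - s| := by
      rw [← Real.norm_eq_abs]
      exact intervalIntegral.norm_integral_le_of_norm_le_const
        (fun x _ => by rw [Real.norm_eq_abs]; exact hC x)
    have h6 : (∫ r in s..t, a r) ≤ C * (t - s) := by
      have h := (abs_le.mp hb).2
      rwa [abs_of_nonneg (by linarith : (0:ℝ) ≤ t - s)] at h
    have h7 : (∫ r in s..t, a r) ≤ (C + α) * L₀ + (-α * (t - s)) := by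
      nlinarith
    calc Real.exp (∫ r in s..t, a r)
        ≤ Real.exp ((C + α) * L₀ + (-α * (t - s))) := Real.exp_le_exp.mpr h7
      _ = Real.exp ((C + α) * L₀) * Real.exp (-α * (t - s)) := Real.exp_add _ _
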